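/- For any U, X ∈ ℝ^{n×r} with σ_r(X) > 0, dist²(U, X) ≤ (1/(2(√2 − 1)·σ_r(X)²))·‖UUᵀ − XXᵀ‖_F². -/

import Mathlib

open Matrix

noncomputable def vnorm {ι : Type*} [Fintype ι] (v : ι → ℝ) : ℝ :=
  Real.sqrt (∑ i, v i ^ 2)

noncomputable def frob {α β : Type*} [Fintype α] [Fintype β] (M : Matrix α β ℝ) : ℝ :=
  Real.sqrt (∑ i, ∑ j, M i j ^ 2)

noncomputable def sval {α β : Type*} [Fintype α] [Fintype β] (M : Matrix α β ℝ) (k : ℕ) : ℝ :=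
  sSup { t : ℝ | ∃ V : Submodule ℝ (β → ℝ), Module.finrank ℝ V = k ∧
    ∀ v ∈ V, t * vnorm v ≤ vnorm (M.mulVec v) }

noncomputable def opNorm {α β : Type*} [Fintype α] [Fintype β] (M : Matrix α β ℝ) : ℝ :=
  sval M 1

noncomputable def pdist {α ρ : Type*} [Fintype α] [Fintype ρ] [DecidableEq ρ]
    (U X : Matrix α ρ ℝ) : ℝ :=
  sInf { d : ℝ | ∃ R : Matrix ρ ρ ℝ, Rᵀ * R = 1 ∧ d = frob (U - X * R) }

noncomputable def mip {α β : Type*} [Fintype α] [Fintype β] (A B : Matrix α β ℝ) : ℝ :=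
  ∑ i, ∑ j, A i j * B i j

noncomputable def mapA {m : ℕ} {α β : Type*} [Fintype α] [Fintype β]
    (A : Fin m → Matrix α β ℝ) (Z : Matrix α β ℝ) : Fin m → ℝ :=
  fun k => mip (A k) Z

def HasRIP {m n₁ n₂ : ℕ} (A : Fin m → Matrix (Fin n₁) (Fin n₂) ℝ) (s : ℕ) (δ : ℝ) : Prop :=
  ∀ Z : Matrix (Fin n₁) (Fin n₂) ℝ, Z.rank ≤ s →
    (1 - δ) * frob Z ^ 2 ≤ ∑ k, mapA A Z k ^ 2 ∧
      ∑ k, mapA A Z k ^ 2 ≤ (1 + δ) * frob Z ^ 2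

noncomputable def gradU {m n₁ n₂ r : ℕ} (A : Fin m → Matrix (Fin n₁) (Fin n₂) ℝ)
    (M : Matrix (Fin n₁) (Fin n₂) ℝ)
    (U : Matrix (Fin n₁) (Fin r) ℝ) (V : Matrix (Fin n₂) (Fin r) ℝ) :
    Matrix (Fin n₁) (Fin r) ℝ :=
  (∑ k, mip (A k) (U * Vᵀ - M) • (A k * V)) + (1 / 4 : ℝ) • (U * (Uᵀ * U - Vᵀ * V))

noncomputable def gradV {m n₁ n₂ r : ℕ} (A : Fin m → Matrix (Fin n₁) (Fin n₂) ℝ)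
    (M : Matrix (Fin n₁) (Fin n₂) ℝ)
    (U : Matrix (Fin n₁) (Fin r) ℝ) (V : Matrix (Fin n₂) (Fin r) ℝ) :
    Matrix (Fin n₂) (Fin r) ℝ :=
  (∑ k, mip (A k) (U * Vᵀ - M) • ((A k)ᵀ * U)) + (1 / 4 : ℝ) • (V * (Vᵀ * V - Uᵀ * U))

noncomputable def gradg {m n₁ n₂ r : ℕ} (A : Fin m → Matrix (Fin n₁) (Fin n₂) ℝ)
    (M : Matrix (Fin n₁) (Fin n₂) ℝ)
    (U : Matrix (Fin n₁) (Fin r) ℝ) (V : Matrix (Fin n₂) (Fin r) ℝ) :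
    Matrix (Fin n₁ ⊕ Fin n₂) (Fin r) ℝ :=
  Matrix.fromRows (gradU A M U V) (gradV A M U V)

section helpers
variable {α β : Type*} [Fintype α] [Fintype β]

lemma frob_nonneg (A : Matrix α β ℝ) : 0 ≤ frob A := Real.sqrt_nonneg _

lemma vnorm_nonneg {ι : Type*} [Fintype ι] (v : ι → ℝ) : 0 ≤ vnorm v := Real.sqrt_nonneg _

lemma vnorm_sq {ι : Type*} [Fintype ι] (v : ι → ℝ) : vnorm v ^ 2 = ∑ i, v i ^ 2 :=
  Real.sq_sqrt (Finset.sum_nonneg fun _ _ => sq_nonneg _)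

lemma frob_sq (A : Matrix α β ℝ) : frob A ^ 2 = ∑ i, ∑ j, A i j ^ 2 :=
  Real.sq_sqrt (Finset.sum_nonneg fun _ _ => Finset.sum_nonneg fun _ _ => sq_nonneg _)

lemma mip_eq_trace (A B : Matrix α β ℝ) : mip A B = Matrix.trace (Aᵀ * B) := by
  unfold mip Matrix.trace
  rw [Finset.sum_comm]
  apply Finset.sum_congr rfl
  intro j _
  simp [Matrix.mul_apply, Matrix.diag]

lemma frob_sq_eq_trace (A : Matrix α β ℝ) : frob A ^ 2 = Matrix.trace (Aᵀ * A) := by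
  rw [frob_sq, ← mip_eq_trace]
  unfold mip
  simp [sq]

lemma mip_le (A B : Matrix α β ℝ) : mip A B ≤ frob A * frob B := by
  have h := Real.sum_mul_le_sqrt_mul_sqrt Finset.univ
    (fun p : α × β => A p.1 p.2) (fun p : α × β => B p.1 p.2)
  simpa [mip, frob, Fintype.sum_prod_type] using h

lemma neg_mip_le (A B : Matrix α β ℝ) : -(frob A * frob B) ≤ mip A B := by
  have h := mip_le A (-B)
  have h1 : mip A (-B) = -mip A B := by
    unfold mip; simp [mul_neg, Finset.sum_neg_distrib]
  have h2 : frob (-B) = frob B := by unfold frob; simp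
  rw [h1, h2] at h
  linarith

end helpers

section psd
variable {k : ℕ}

lemma conjT_eq_transpose {p q : Type*} [Fintype p] [Fintype q] (A : Matrix p q ℝ) : Aᴴ = Aᵀ := by
  ext i j; simp [Matrix.conjTranspose_apply]

lemma psd_trace_nonneg {M : Matrix (Fin k) (Fin k) ℝ} (hM : M.PosSemidef) :
    0 ≤ Matrix.trace M := by
  apply Finset.sum_nonneg
  intro i _
  have h := hM.dotProduct_mulVec_nonneg (Pi.single i 1)
  simpa [Matrix.mulVec_single, dotProduct, Pi.single_apply] using h

open scoped MatrixOrder in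
lemma trace_mul_psd_nonneg {P G : Matrix (Fin k) (Fin k) ℝ}
    (hP : P.PosSemidef) (hG : G.PosSemidef) : 0 ≤ Matrix.trace (P * G) := by
  obtain ⟨C, hC⟩ : ∃ C : Matrix (Fin k) (Fin k) ℝ, P = Cᴴ * C :=
    ⟨CFC.sqrt P, by rw [(CFC.sqrt_nonneg P).posSemidef.1.eq, CFC.sqrt_mul_sqrt_self P hP.nonneg]⟩
  have hcyc : Matrix.trace (P * G) = Matrix.trace (C * G * Cᴴ) := by
    rw [hC, Matrix.mul_assoc, Matrix.trace_mul_comm]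
  rw [hcyc]
  exact psd_trace_nonneg (hG.mul_mul_conjTranspose_same C)

end psd

section svals
variable {n r : ℕ}

lemma sval_le_ratio (X : Matrix (Fin n) (Fin r) ℝ) (v : Fin r → ℝ) :
    sval X r * vnorm v ≤ vnorm (X.mulVec v) := by
  rcases eq_or_lt_of_le (vnorm_nonneg v) with h0 | h0
  · rw [← h0, mul_zero]; exact vnorm_nonneg _
  rw [← le_div_iff₀ h0]
  apply Real.sSup_le
  · rintro t ⟨V, hV, hVle⟩
    have hVtop : V = ⊤ := by
      apply Submodule.eq_top_of_finrank_eq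
      rw [hV]
      simp [Module.finrank_fintype_fun_eq_card]
    rw [le_div_iff₀ h0]
    exact hVle v (by rw [hVtop]; trivial)
  · exact div_nonneg (vnorm_nonneg _) (le_of_lt h0)

lemma sval_psd (X : Matrix (Fin n) (Fin r) ℝ) (hs : 0 ≤ sval X r) :
    (Xᵀ * X - (sval X r ^ 2) • (1 : Matrix (Fin r) (Fin r) ℝ)).PosSemidef := by
  refine Matrix.PosSemidef.of_dotProduct_mulVec_nonneg ?_ ?_
  · unfold Matrix.IsHermitian
    rw [conjT_eq_transpose]
    simp [Matrix.transpose_sub, Matrix.transpose_mul, Matrix.transpose_smul]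
  · intro x
    have key := sval_le_ratio X x
    have key2 : (sval X r) ^ 2 * vnorm x ^ 2 ≤ vnorm (X.mulVec x) ^ 2 := by
      rw [← mul_pow]
      exact pow_le_pow_left₀ (mul_nonneg hs (vnorm_nonneg x)) key 2
    have hxx : star x = x := by funext i; simp
    rw [hxx]
    have e1 : dotProduct x ((Xᵀ * X - (sval X r ^ 2) • 1) *ᵥ x)
        = dotProduct (X *ᵥ x) (X *ᵥ x) - sval X r ^ 2 * dotProduct x x := by
      rw [Matrix.sub_mulVec, dotProduct_sub]
      congr 1
      · rw [← Matrix.mulVec_mulVec, Matrix.dotProduct_mulVec, Matrix.vecMul_transpose]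
      · rw [Matrix.smul_mulVec, Matrix.one_mulVec, dotProduct_smul]
        simp [smul_eq_mul]
    rw [e1, sub_nonneg]
    have hd1 : dotProduct x x = vnorm x ^ 2 := by
      rw [vnorm_sq]; simp [dotProduct, sq]
    have hd2 : dotProduct (X *ᵥ x) (X *ᵥ x) = vnorm (X *ᵥ x) ^ 2 := by
      rw [vnorm_sq]; simp [dotProduct, sq]
    rw [hd1, hd2]
    exact key2

end svals


open scoped RealInnerProductSpace

private lemma toEuclideanLin_comp {r : ℕ} (M N : Matrix (Fin r) (Fin r) ℝ)
    (x : EuclideanSpace ℝ (Fin r)) :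
    Matrix.toEuclideanLin M (Matrix.toEuclideanLin N x) = Matrix.toEuclideanLin (M * N) x := by
  simp [Matrix.toEuclideanLin_apply, Matrix.mulVec_mulVec]

open scoped MatrixOrder in
lemma exists_polar {r : ℕ} (B : Matrix (Fin r) (Fin r) ℝ) :
    ∃ R : Matrix (Fin r) (Fin r) ℝ, Rᵀ * R = 1 ∧ (Rᵀ * B).PosSemidef := by
  classical
  have hBtB : (Bᴴ * B).PosSemidef := Matrix.posSemidef_conjTranspose_mul_self B
  set H := CFC.sqrt (Bᴴ * B) with hHdef
  have hHpsd : H.PosSemidef := (CFC.sqrt_nonneg _).posSemidef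
  have hHH : H * H = Bᴴ * B := CFC.sqrt_mul_sqrt_self _ hBtB.nonneg
  let hb : EuclideanSpace ℝ (Fin r) →ₗ[ℝ] EuclideanSpace ℝ (Fin r) := Matrix.toEuclideanLin B
  let hh : EuclideanSpace ℝ (Fin r) →ₗ[ℝ] EuclideanSpace ℝ (Fin r) := Matrix.toEuclideanLin H
  have hnorm : ∀ x : EuclideanSpace ℝ (Fin r), ‖hb x‖ = ‖hh x‖ := by
    intro x
    have h1 : (inner ℝ (hb x) (hb x) : ℝ) = (inner ℝ (hh x) (hh x) : ℝ) := by
      rw [← LinearMap.adjoint_inner_right hb, ← LinearMap.adjoint_inner_right hh]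
      show (inner ℝ x ((LinearMap.adjoint (Matrix.toEuclideanLin B)) (hb x)) : ℝ)
          = (inner ℝ x ((LinearMap.adjoint (Matrix.toEuclideanLin H)) (hh x)) : ℝ)
      rw [← Matrix.toEuclideanLin_conjTranspose_eq_adjoint,
        ← Matrix.toEuclideanLin_conjTranspose_eq_adjoint]
      show (inner ℝ x (Matrix.toEuclideanLin Bᴴ (Matrix.toEuclideanLin B x)) : ℝ)
          = (inner ℝ x (Matrix.toEuclideanLin Hᴴ (Matrix.toEuclideanLin H x)) : ℝ)
      rw [toEuclideanLin_comp, toEuclideanLin_comp, hHpsd.1.eq, hHH]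
    have h2 : ‖hb x‖ ^ 2 = ‖hh x‖ ^ 2 := by
      rw [← real_inner_self_eq_norm_sq, ← real_inner_self_eq_norm_sq, h1]
    calc ‖hb x‖ = Real.sqrt (‖hb x‖ ^ 2) := (Real.sqrt_sq (norm_nonneg _)).symm
      _ = Real.sqrt (‖hh x‖ ^ 2) := by rw [h2]
      _ = ‖hh x‖ := Real.sqrt_sq (norm_nonneg _)
  have hker : LinearMap.ker hh ≤ LinearMap.ker hb := by
    intro x hx
    rw [LinearMap.mem_ker] at hx ⊢
    have := hnorm x
    rw [hx, norm_zero, norm_eq_zero] at this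
    exact this
  let q : (EuclideanSpace ℝ (Fin r) ⧸ LinearMap.ker hh) →ₗ[ℝ] EuclideanSpace ℝ (Fin r) :=
    (LinearMap.ker hh).liftQ hb hker
  let f : LinearMap.range hh →ₗ[ℝ] EuclideanSpace ℝ (Fin r) :=
    q ∘ₗ (LinearMap.quotKerEquivRange hh).symm.toLinearMap
  have hf : ∀ x : EuclideanSpace ℝ (Fin r),
      f ⟨hh x, LinearMap.mem_range_self hh x⟩ = hb x := by
    intro x
    show q ((LinearMap.quotKerEquivRange hh).symm ⟨hh x, LinearMap.mem_range_self hh x⟩) = hb x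
    rw [LinearMap.quotKerEquivRange_symm_apply_image]
    exact Submodule.liftQ_apply _ hb x
  have fiso : ∀ s : LinearMap.range hh, ‖f s‖ = ‖s‖ := by
    rintro ⟨y, hy⟩
    obtain ⟨x, rfl⟩ := hy
    rw [hf x]
    show ‖hb x‖ = ‖hh x‖
    exact hnorm x
  let L : (LinearMap.range hh : Submodule ℝ (EuclideanSpace ℝ (Fin r))) →ₗᵢ[ℝ]
      EuclideanSpace ℝ (Fin r) := ⟨f, fiso⟩
  let Lex := L.extend
  let R : Matrix (Fin r) (Fin r) ℝ := Matrix.toEuclideanLin.symm Lex.toLinearMap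
  have hRlin : Matrix.toEuclideanLin R = Lex.toLinearMap :=
    Matrix.toEuclideanLin.apply_symm_apply _
  have hRH : R * H = B := by
    apply Matrix.toEuclideanLin.injective
    apply LinearMap.ext
    intro x
    show Matrix.toEuclideanLin (R * H) x = hb x
    rw [← toEuclideanLin_comp R H x, hRlin]
    have hmem : hh x ∈ LinearMap.range hh := LinearMap.mem_range_self hh x
    have h3 : Lex.toLinearMap (hh x) = L ⟨hh x, hmem⟩ := L.extend_apply ⟨hh x, hmem⟩
    show Lex.toLinearMap (Matrix.toEuclideanLin H x) = hb x
    rw [show Matrix.toEuclideanLin H x = hh x from rfl, h3]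
    exact hf x
  have hRorth : Rᵀ * R = 1 := by
    ext i j
    have hins := Lex.inner_map_map (EuclideanSpace.single i (1:ℝ))
      (EuclideanSpace.single j (1:ℝ))
    have hLi : ∀ k : Fin r, (Lex (EuclideanSpace.single k (1:ℝ)) : EuclideanSpace ℝ (Fin r))
        = Matrix.toEuclideanLin R (EuclideanSpace.single k (1:ℝ)) := by
      intro k; rw [hRlin]; rfl
    rw [hLi i, hLi j] at hins
    have hmv : ∀ k : Fin r, Matrix.toEuclideanLin R (EuclideanSpace.single k (1:ℝ))
        = (WithLp.equiv 2 (Fin r → ℝ)).symm (fun l => R l k) := by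
      intro k
      rw [show EuclideanSpace.single k (1:ℝ)
          = (WithLp.equiv 2 (Fin r → ℝ)).symm (Pi.single k 1) from rfl]
      show (WithLp.equiv 2 (Fin r → ℝ)).symm (R *ᵥ Pi.single k 1) = _
      congr 1
      rw [Matrix.mulVec_single]
      funext l; simp
    rw [hmv i, hmv j] at hins
    simp only [PiLp.inner_apply, RCLike.inner_apply, starRingEnd_apply, star_trivial,
      WithLp.equiv_symm_apply, PiLp.toLp_apply, EuclideanSpace.single_apply] at hins
    rw [Matrix.mul_apply, Matrix.one_apply]
    simp only [Matrix.transpose_apply]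
    rw [show ∑ x, R x i * R x j = ∑ x, R x j * R x i from
      Finset.sum_congr rfl fun x _ => mul_comm _ _, hins]
    by_cases hij : i = j
    · simp [hij, Finset.sum_ite_eq]
    · simp only [hij, if_false]
      rw [Finset.sum_eq_zero]
      intro x _
      by_cases hxi : x = i <;> by_cases hxj : x = j <;> simp_all
  refine ⟨R, hRorth, ?_⟩
  have : Rᵀ * B = H := by
    rw [← hRH, ← Matrix.mul_assoc, hRorth, Matrix.one_mul]
  rw [this]
  exact hHpsd


section main
variable {n r : ℕ}

private lemma tr4 (F1 : Matrix (Fin n) (Fin r) ℝ) (F2 : Matrix (Fin r) (Fin n) ℝ)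
    (F3 : Matrix (Fin n) (Fin r) ℝ) (F4 : Matrix (Fin r) (Fin n) ℝ) :
    Matrix.trace (F1 * F2 * (F3 * F4)) = Matrix.trace ((F2 * F3) * (F4 * F1)) := by
  rw [Matrix.mul_assoc, Matrix.trace_mul_comm]
  congr 1
  simp only [Matrix.mul_assoc]

end main

set_option maxHeartbeats 1000000 in
/-- Bounding dist²(U, X) by ‖UUᵀ − XXᵀ‖_F². -/
theorem dist_sq_le_frob_diff_sq {n r : ℕ} (U X : Matrix (Fin n) (Fin r) ℝ)
    (h : 0 < sval X r) :
    pdist U X ^ 2 ≤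
      (1 / (2 * (Real.sqrt 2 - 1) * sval X r ^ 2)) * frob (U * Uᵀ - X * Xᵀ) ^ 2 := by
  obtain ⟨R, hRorth, hGpsd⟩ := exists_polar (Xᵀ * U)
  have hRRT : R * Rᵀ = 1 := mul_eq_one_comm.mp hRorth
  set σ := sval X r with hσdef
  set Y : Matrix (Fin n) (Fin r) ℝ := X * R with hYdef
  set D : Matrix (Fin n) (Fin r) ℝ := U - Y with hDdef
  set G : Matrix (Fin r) (Fin r) ℝ := Rᵀ * (Xᵀ * U) with hGdef
  have hU : U = Y + D := by rw [hDdef]; abel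
  have hGsym : Gᵀ = G := by
    rw [← conjT_eq_transpose G]
    exact hGpsd.1
  have hYU : Yᵀ * U = G := by
    rw [hYdef, hGdef, Matrix.transpose_mul, Matrix.mul_assoc]
  have hUY : Uᵀ * Y = G := by
    have h1 : Uᵀ * Y = (Yᵀ * U)ᵀ := by simp [Matrix.transpose_mul]
    rw [h1, hYU, hGsym]
  have hSsym : Yᵀ * D = Dᵀ * Y := by
    have h1 : Yᵀ * D = G - Yᵀ * Y := by rw [hDdef, Matrix.mul_sub, hYU]
    have h2 : Dᵀ * Y = G - Yᵀ * Y := by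
      rw [hDdef, Matrix.transpose_sub, Matrix.sub_mul, hUY]
    rw [h1, h2]
  have hSsymT : (Dᵀ * Y)ᵀ = Dᵀ * Y := by
    rw [Matrix.transpose_mul, Matrix.transpose_transpose]
    exact hSsym
  have hXX : X * Xᵀ = Y * Yᵀ := by
    rw [hYdef, Matrix.transpose_mul, ← Matrix.mul_assoc, Matrix.mul_assoc X R Rᵀ, hRRT,
      Matrix.mul_one]
  have hA : U * Uᵀ - X * Xᵀ = Y * Dᵀ + D * Yᵀ + D * Dᵀ := by
    rw [hXX, hU]
    simp only [Matrix.transpose_add, Matrix.add_mul, Matrix.mul_add]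
    abel
  -- scalar abbreviations
  set a : ℝ := Matrix.trace ((Yᵀ * Y) * (Dᵀ * D)) with hadef
  set b : ℝ := Matrix.trace ((Dᵀ * Y) * (Dᵀ * Y)) with hbdef
  set c : ℝ := Matrix.trace ((Dᵀ * D) * (Dᵀ * Y)) with hcdef
  set e : ℝ := Matrix.trace ((Dᵀ * D) * (Dᵀ * D)) with hedef
  set g : ℝ := Matrix.trace ((Dᵀ * D) * G) with hgdef
  -- the key trace expansion
  have hF : frob (U * Uᵀ - X * Xᵀ) ^ 2 = 2 * a + 2 * b + 4 * c + e := by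
    rw [hA, frob_sq_eq_trace]
    have expand : ((Y * Dᵀ + D * Yᵀ + D * Dᵀ)ᵀ * (Y * Dᵀ + D * Yᵀ + D * Dᵀ)) =
        D * Yᵀ * (Y * Dᵀ) + D * Yᵀ * (D * Yᵀ) + D * Yᵀ * (D * Dᵀ)
        + (Y * Dᵀ * (Y * Dᵀ) + Y * Dᵀ * (D * Yᵀ) + Y * Dᵀ * (D * Dᵀ))
        + (D * Dᵀ * (Y * Dᵀ) + D * Dᵀ * (D * Yᵀ) + D * Dᵀ * (D * Dᵀ)) := by
      simp only [Matrix.transpose_add, Matrix.transpose_mul, Matrix.transpose_transpose,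
        Matrix.add_mul, Matrix.mul_add]
      abel
    rw [expand]
    simp only [Matrix.trace_add]
    rw [tr4 D Yᵀ Y Dᵀ, tr4 D Yᵀ D Yᵀ, tr4 D Yᵀ D Dᵀ, tr4 Y Dᵀ Y Dᵀ, tr4 Y Dᵀ D Yᵀ,
      tr4 Y Dᵀ D Dᵀ, tr4 D Dᵀ Y Dᵀ, tr4 D Dᵀ D Yᵀ, tr4 D Dᵀ D Dᵀ]
    -- now rewrite each to canonical form
    have e2 : Matrix.trace ((Yᵀ * D) * (Yᵀ * D)) = b := by
      conv_lhs => rw [← Matrix.trace_transpose]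
      rw [hbdef]
      congr 1
      simp only [Matrix.transpose_mul, Matrix.transpose_transpose]
    have e3 : Matrix.trace ((Yᵀ * D) * (Dᵀ * D)) = c := by
      conv_lhs => rw [← Matrix.trace_transpose]
      rw [hcdef]
      congr 1
      simp only [Matrix.transpose_mul, Matrix.transpose_transpose]
    have e5 : Matrix.trace ((Dᵀ * D) * (Yᵀ * Y)) = a := Matrix.trace_mul_comm _ _
    have e7 : Matrix.trace ((Dᵀ * Y) * (Dᵀ * D)) = c := Matrix.trace_mul_comm _ _
    have e8 : Matrix.trace ((Dᵀ * D) * (Yᵀ * D)) = c := by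
      conv_lhs => rw [← Matrix.trace_transpose]
      have h9 : ((Dᵀ * D) * (Yᵀ * D))ᵀ = (Dᵀ * Y) * (Dᵀ * D) := by
        simp only [Matrix.transpose_mul, Matrix.transpose_transpose]
      rw [h9, e7]
    rw [e2, e3, e5, e7, e8]
    ring
  -- remaining scalar facts
  have hb : b = frob (Dᵀ * Y) ^ 2 := by
    rw [frob_sq_eq_trace, hSsymT]
  have he : e = frob (Dᵀ * D) ^ 2 := by
    rw [frob_sq_eq_trace]
    rw [hedef]
    congr 1
    simp only [Matrix.transpose_mul, Matrix.transpose_transpose]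
  have hc : c = mip (Dᵀ * D) (Dᵀ * Y) := by
    rw [mip_eq_trace]
    rw [hcdef]
    congr 1
    simp only [Matrix.transpose_mul, Matrix.transpose_transpose]
  have hcs : -(frob (Dᵀ * D) * frob (Dᵀ * Y)) ≤ mip (Dᵀ * D) (Dᵀ * Y) :=
    neg_mip_le _ _
  have hPpsd : (Dᵀ * D).PosSemidef := by
    have h1 := Matrix.posSemidef_conjTranspose_mul_self D
    rwa [conjT_eq_transpose] at h1
  have hgpos : 0 ≤ g := trace_mul_psd_nonneg hPpsd hGpsd
  have hGdecomp : G = Yᵀ * Y + Dᵀ * Y := by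
    rw [← hYU, hU, Matrix.mul_add, hSsym]
  have hg2 : g = a + c := by
    rw [hgdef, hGdecomp, Matrix.mul_add, Matrix.trace_add, hadef, hcdef,
      Matrix.trace_mul_comm (Dᵀ * D) (Yᵀ * Y)]
  have htP : Matrix.trace (Dᵀ * D) = frob D ^ 2 := (frob_sq_eq_trace D).symm
  have hYYpsd : (Yᵀ * Y - (σ ^ 2) • (1 : Matrix (Fin r) (Fin r) ℝ)).PosSemidef := by
    have base := sval_psd X (le_of_lt h)
    have conj := base.conjTranspose_mul_mul_same R
    rw [conjT_eq_transpose] at conj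
    have heq : Rᵀ * (Xᵀ * X - (sval X r ^ 2) • 1) * R
        = Yᵀ * Y - (σ ^ 2) • (1 : Matrix (Fin r) (Fin r) ℝ) := by
      rw [Matrix.mul_sub, Matrix.sub_mul]
      congr 1
      · rw [hYdef, Matrix.transpose_mul]
        simp only [Matrix.mul_assoc]
      · rw [Matrix.mul_smul, Matrix.smul_mul, Matrix.mul_one, hRorth, ← hσdef]
    rwa [heq] at conj
  have ha : σ ^ 2 * frob D ^ 2 ≤ a := by
    have h0 := trace_mul_psd_nonneg hYYpsd hPpsd
    rw [Matrix.sub_mul, Matrix.trace_sub, Matrix.smul_mul, Matrix.one_mul,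
      Matrix.trace_smul, sub_nonneg, smul_eq_mul, htP] at h0
    exact h0
  -- sqrt 2 facts
  have hs2 : Real.sqrt 2 ^ 2 = 2 := Real.sq_sqrt (by norm_num)
  have hsnn : 0 ≤ Real.sqrt 2 := Real.sqrt_nonneg 2
  have h1s : 1 < Real.sqrt 2 := by nlinarith
  have h2s : Real.sqrt 2 ≤ 2 := by nlinarith
  -- the central inequality
  have hmain : 2 * (Real.sqrt 2 - 1) * σ ^ 2 * frob D ^ 2
      ≤ frob (U * Uᵀ - X * Xᵀ) ^ 2 := by
    set w := Real.sqrt 2 with hw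
    set s : ℝ := frob (Dᵀ * Y) with hsdef
    set p : ℝ := frob (Dᵀ * D) with hpdef
    set m : ℝ := mip (Dᵀ * D) (Dᵀ * Y) with hmdef
    have hm1 : 0 ≤ (4 - 2 * w) * g := mul_nonneg (by linarith) hgpos
    have hm2 : 2 * w * (-(p * s)) ≤ 2 * w * m :=
      mul_le_mul_of_nonneg_left hcs (by positivity)
    have hm3 : (2 * w - 2) * (σ ^ 2 * frob D ^ 2) ≤ (2 * w - 2) * a :=
      mul_le_mul_of_nonneg_left ha (by linarith)
    have hsq : 0 ≤ 2 * s ^ 2 - 2 * w * (p * s) + p ^ 2 := by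
      have hid : (w * s - p) ^ 2 = w ^ 2 * s ^ 2 - 2 * w * (p * s) + p ^ 2 := by ring
      rw [hs2] at hid
      linarith only [sq_nonneg (w * s - p), hid]
    have hc3 : 2 * w * c = 2 * w * m := by rw [hc]
    have key2 : 0 ≤ 2 * b + 2 * w * c + e := by
      linarith only [hb, he, hc3, hm2, hsq]
    have hg3 : (4 - 2 * w) * g = (4 - 2 * w) * a + (4 - 2 * w) * c := by
      rw [hg2]; ring
    rw [hF]
    linarith only [hm3, hm1, hg3, key2]
  -- bounding pdist
  have hmem : frob (U - X * R) ∈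
      { d : ℝ | ∃ R' : Matrix (Fin r) (Fin r) ℝ, R'ᵀ * R' = 1 ∧ d = frob (U - X * R') } :=
    ⟨R, hRorth, rfl⟩
  have hbdd : BddBelow { d : ℝ | ∃ R' : Matrix (Fin r) (Fin r) ℝ,
      R'ᵀ * R' = 1 ∧ d = frob (U - X * R') } := by
    refine ⟨0, ?_⟩
    rintro d ⟨R', -, rfl⟩
    exact frob_nonneg _
  have hpd_le : pdist U X ≤ frob D := by
    rw [hDdef, hYdef]
    exact csInf_le hbdd hmem
  have hpd_nonneg : 0 ≤ pdist U X := by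
    apply Real.sInf_nonneg
    rintro d ⟨R', -, rfl⟩
    exact frob_nonneg _
  have hpd2 : pdist U X ^ 2 ≤ frob D ^ 2 := pow_le_pow_left₀ hpd_nonneg hpd_le 2
  have hKpos : 0 < 2 * (Real.sqrt 2 - 1) * σ ^ 2 := by
    have h3 : (0:ℝ) < Real.sqrt 2 - 1 := by linarith
    exact mul_pos (mul_pos two_pos h3) (pow_pos h 2)
  rw [div_mul_eq_mul_div, one_mul, le_div_iff₀ hKpos]
  calc pdist U X ^ 2 * (2 * (Real.sqrt 2 - 1) * σ ^ 2)
      ≤ frob D ^ 2 * (2 * (Real.sqrt 2 - 1) * σ ^ 2) :=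
        mul_le_mul_of_nonneg_right hpd2 (le_of_lt hKpos)
    _ ≤ frob (U * Uᵀ - X * Xᵀ) ^ 2 := by linarith [hmain]
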